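/- Fix 0 < q ≤ p < 1 and let A be the adjacency matrix of G ~ G(n,p,q). With probability tending to 1 as n → ∞, for every nowhere-zero vector φ ∈ ℝ^n, every subset S ⊆ [n] with |S| ≥ 3 log_{1/(1-q)} n contains a pair u ≠ v with A_{uv} φ(u) φ(v) < 0. Consequently, any partition of [n] into sets each of which satisfies A_{uv} φ(u) φ(v) ≥ 0 on all internal pairs has at least n / (3 log_{1/(1-q)} n) parts. -/

import Mathlib

open MeasureTheory ProbabilityTheory Finset Filter Topology
open scoped ENNReal NNReal

/-! Auxiliary definitions and lemmas -/

def M0 (m : ℕ) : ℕ := (Finset.univ.filter fun p : Fin m × Fin m => p.1 < p.2).card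

lemma two_mul_M0 (m : ℕ) : 2 * M0 m = m * m - m := by
  have hbij : (Finset.univ.filter fun p : Fin m × Fin m => p.1 < p.2).card
      = (Finset.univ.filter fun p : Fin m × Fin m => p.2 < p.1).card := by
    apply Finset.card_bij (fun p _ => (p.2, p.1))
    · intro a ha; simp only [mem_filter, mem_univ, true_and] at ha ⊢; exact ha
    · intro a _ b _ h
      exact Prod.ext (congrArg Prod.snd h) (congrArg Prod.fst h)
    · intro b hb
      simp only [mem_filter, mem_univ, true_and] at hb
      exact ⟨(b.2, b.1), by simp [hb], rfl⟩
  have hdisj : Disjoint (Finset.univ.filter fun p : Fin m × Fin m => p.1 < p.2)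
      (Finset.univ.filter fun p : Fin m × Fin m => p.2 < p.1) :=
    Finset.disjoint_filter.mpr fun p _ h1 h2 => absurd h2 h1.asymm
  have hsplit : ((Finset.univ.filter fun p : Fin m × Fin m => p.1 < p.2) ∪
      (Finset.univ.filter fun p : Fin m × Fin m => p.2 < p.1)).card
      = (Finset.univ.filter fun p : Fin m × Fin m => p.1 ≠ p.2).card := by
    congr 1
    ext p
    simp only [mem_union, mem_filter, mem_univ, true_and]
    constructor
    · rintro (h | h); exacts [h.ne, h.ne']
    · exact fun h => lt_or_gt_of_ne h
  have hoff : (Finset.univ.filter fun p : Fin m × Fin m => p.1 ≠ p.2).card = m * m - m := by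
    have : (Finset.univ.filter fun p : Fin m × Fin m => p.1 ≠ p.2)
        = (Finset.univ : Finset (Fin m)).offDiag := by
      ext p; simp [Finset.mem_offDiag]
    rw [this, Finset.offDiag_card]; simp
  rw [Finset.card_union_of_disjoint hdisj] at hsplit
  rw [two_mul, M0]
  omega

def sb (b : Bool) : ℝ := if b then 1 else -1

lemma sb_eq (b : Bool) : sb b = 1 ∨ sb b = -1 := by cases b <;> simp [sb]

lemma sb_mul_pos {x : ℝ} (hx : x ≠ 0) : 0 < sb (decide (0 < x)) * x := by
  rcases hx.lt_or_gt with h | h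
  · simp only [sb, decide_eq_true_eq, if_neg (not_lt_of_gt h)]; nlinarith
  · simp only [sb, decide_eq_true_eq, if_pos h]; nlinarith

noncomputable def tau {n m : ℕ} (v : Fin m → Fin n) (σ : Fin m → Bool) (u : Fin n) : ℝ :=
  if h : ∃ i, v i = u then sb (σ h.choose) else 1

lemma tau_apply {n m : ℕ} {v : Fin m → Fin n} (hv : Function.Injective v)
    (σ : Fin m → Bool) (i : Fin m) : tau v σ (v i) = sb (σ i) := by
  have h : ∃ j, v j = v i := ⟨i, rfl⟩
  rw [tau, dif_pos h, hv h.choose_spec]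

lemma tau_eq {n m : ℕ} (v : Fin m → Fin n) (σ : Fin m → Bool) (u : Fin n) :
    tau v σ u = 1 ∨ tau v σ u = -1 := by
  rw [tau]; split
  · exact sb_eq _
  · exact Or.inl rfl

def edges {n m : ℕ} (v : Fin m → Fin n) : Finset {e : Fin n × Fin n // e.1 < e.2} :=
  Finset.univ.filter fun e =>
    e.1.1 ∈ Finset.image v Finset.univ ∧ e.1.2 ∈ Finset.image v Finset.univ

lemma M0_le_card_edges {n m : ℕ} {v : Fin m → Fin n} (hv : Function.Injective v) :
    M0 m ≤ (edges v).card := by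
  classical
  have key : ∀ p : Fin m × Fin m, p.1 < p.2 →
      (if h : v p.1 < v p.2 then ((v p.1, v p.2) : Fin n × Fin n) else (v p.2, v p.1)).1
        < (if h : v p.1 < v p.2 then ((v p.1, v p.2) : Fin n × Fin n) else (v p.2, v p.1)).2 := by
    intro p hp
    split
    · assumption
    · rename_i h
      exact lt_of_le_of_ne (le_of_not_gt h) fun he => hp.ne' (hv he)
  have hcard : ((edges v).image Subtype.val).card = (edges v).card :=
    Finset.card_image_of_injective _ Subtype.val_injective
  rw [M0, ← hcard]
  apply Finset.card_le_card_of_injOn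
      (fun p => if v p.1 < v p.2 then ((v p.1, v p.2) : Fin n × Fin n) else (v p.2, v p.1))
  · intro p hp
    simp only [Finset.coe_filter, Finset.mem_coe, Set.mem_setOf_eq, mem_filter, mem_univ, true_and] at hp
    have hlt := key p hp
    simp only [dite_eq_ite] at hlt
    refine Finset.mem_image.mpr ⟨⟨_, hlt⟩, ?_, rfl⟩
    simp only [edges, mem_filter, mem_univ, true_and]
    refine ⟨?_, ?_⟩ <;> split <;>
      exact Finset.mem_image_of_mem v (Finset.mem_univ _)
  · intro a ha b hb hab
    simp only [Finset.coe_filter, Set.mem_setOf_eq, mem_univ, true_and] at ha hb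
    simp only at hab
    split at hab <;> split at hab <;>
      rw [Prod.mk.injEq] at hab <;>
      obtain ⟨h1, h2⟩ := hab
    · exact Prod.ext (hv h1) (hv h2)
    · exact absurd (ha.trans_eq (hv h2)) (not_lt_of_gt (hb.trans_eq (hv h1).symm))
    · exact absurd (ha.trans_eq (hv h1)) (not_lt_of_gt (hb.trans_eq (hv h2).symm))
    · exact Prod.ext (hv h2) (hv h1)

def Bad {Ωn : Type*} {n m : ℕ} (X : Fin n → Fin n → Ωn → ℝ)
    (v : Fin m → Fin n) (σ : Fin m → Bool) : Set Ωn :=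
  ⋂ e ∈ edges v, {ω | X e.1.1 e.1.2 ω ≠ -(tau v σ e.1.1 * tau v σ e.1.2)}

lemma measurableSet_bad {Ωn : Type*} [MeasurableSpace Ωn] {n m : ℕ}
    {X : Fin n → Fin n → Ωn → ℝ} (hmeas : ∀ u v, Measurable (X u v))
    (v : Fin m → Fin n) (σ : Fin m → Bool) : MeasurableSet (Bad X v σ) := by
  apply MeasurableSet.biInter (Finset.countable_toSet _)
  intro e _
  exact (hmeas e.1.1 e.1.2 (measurableSet_singleton _)).compl

lemma meas_bad_le {Ωn : Type*} [MeasurableSpace Ωn] {p q : ℝ}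
    (hq : 0 < q) (hqp : q ≤ p)
    (μ : Measure Ωn) [IsProbabilityMeasure μ] {n m : ℕ}
    (X : Fin n → Fin n → Ωn → ℝ)
    (hmeas : ∀ u v, Measurable (X u v))
    (hindep : iIndepFun
      (fun e : {e : Fin n × Fin n // e.1 < e.2} => X e.1.1 e.1.2) μ)
    (hdist : ∀ u v : Fin n, u ≠ v →
      μ {ω | X u v ω = 1} = ENNReal.ofReal p ∧
      μ {ω | X u v ω = -1} = ENNReal.ofReal q ∧
      μ {ω | X u v ω = 0} = ENNReal.ofReal (1 - p - q))
    {v : Fin m → Fin n} (hv : Function.Injective v) (σ : Fin m → Bool) :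
    μ (Bad X v σ) ≤ ENNReal.ofReal (1 - q) ^ M0 m := by
  have hBad : Bad X v σ = ⋂ e ∈ edges v,
      (X e.1.1 e.1.2) ⁻¹' ({-(tau v σ e.1.1 * tau v σ e.1.2)}ᶜ) := rfl
  rw [hBad, hindep.meas_biInter
    (fun e _ => ⟨{-(tau v σ e.1.1 * tau v σ e.1.2)}ᶜ,
      (measurableSet_singleton _).compl, rfl⟩)]
  have hfac : ∀ e ∈ edges v,
      μ ((X e.1.1 e.1.2) ⁻¹' ({-(tau v σ e.1.1 * tau v σ e.1.2)}ᶜ))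
        ≤ ENNReal.ofReal (1 - q) := by
    intro e _
    have hne : e.1.1 ≠ e.1.2 := ne_of_lt e.2
    obtain ⟨hd1, hd2, hd3⟩ := hdist e.1.1 e.1.2 hne
    have hcompl : ∀ c : ℝ, μ ((X e.1.1 e.1.2) ⁻¹' ({c}ᶜ))
        = 1 - μ {ω | X e.1.1 e.1.2 ω = c} := by
      intro c
      rw [Set.preimage_compl, measure_compl (hmeas e.1.1 e.1.2 (measurableSet_singleton _))
        (measure_ne_top _ _), measure_univ]
      rfl
    have hofq : ENNReal.ofReal (1 - q) = 1 - ENNReal.ofReal q := by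
      rw [ENNReal.ofReal_sub _ hq.le, ENNReal.ofReal_one]
    have key : ∀ c : ℝ, c = 1 ∨ c = -1 →
        μ ((X e.1.1 e.1.2) ⁻¹' ({c}ᶜ)) ≤ ENNReal.ofReal (1 - q) := by
      rintro c (rfl | rfl)
      · rw [hcompl, hd1, hofq]
        exact tsub_le_tsub_left (ENNReal.ofReal_le_ofReal hqp) 1
      · rw [hcompl, hd2, hofq]
    apply key
    rcases tau_eq v σ e.1.1 with h1 | h1 <;> rcases tau_eq v σ e.1.2 with h2 | h2 <;>
      rw [h1, h2] <;> norm_num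
  calc ∏ e ∈ edges v, μ ((X e.1.1 e.1.2) ⁻¹' ({-(tau v σ e.1.1 * tau v σ e.1.2)}ᶜ))
      ≤ ∏ e ∈ edges v, ENNReal.ofReal (1 - q) := Finset.prod_le_prod' hfac
    _ = ENNReal.ofReal (1 - q) ^ (edges v).card := Finset.prod_const _
    _ ≤ ENNReal.ofReal (1 - q) ^ M0 m := by
        apply pow_le_pow_of_le_one zero_le (ENNReal.ofReal_le_one.mpr (by linarith))
        exact M0_le_card_edges hv

lemma an_tendsto {q : ℝ} (hq : 0 < q) (hq1 : q < 1) :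
    Tendsto (fun n : ℕ =>
      (n:ℝ) ^ ⌈3 * Real.logb (1/(1-q)) n⌉₊ * 2 ^ ⌈3 * Real.logb (1/(1-q)) n⌉₊
        * (1 - q) ^ M0 ⌈3 * Real.logb (1/(1-q)) n⌉₊) atTop (𝓝 0) := by
  set r : ℝ := 1 - q with hrdef
  have hr0 : 0 < r := by simp [hrdef]; linarith
  have hr1 : r < 1 := by simp [hrdef]; linarith
  set b : ℝ := 1 / r with hbdef
  have hb0 : 0 < b := by positivity
  have hb1 : 1 < b := by rw [hbdef]; rw [lt_div_iff₀ hr0]; linarith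
  set C : ℝ := 4 / r with hCdef
  have hC0 : 0 < C := by positivity
  apply squeeze_zero' (g := fun n : ℕ => Real.sqrt (C / n))
  · filter_upwards with n
    positivity
  · rw [eventually_atTop]
    refine ⟨max 2 ⌈C⌉₊, fun n hn => ?_⟩
    have hn2 : 2 ≤ n := le_trans (le_max_left _ _) hn
    have hnC : (C:ℝ) ≤ n := by
      calc C ≤ ⌈C⌉₊ := Nat.le_ceil C
        _ ≤ n := by exact_mod_cast le_trans (le_max_right _ _) hn
    have hn0 : (0:ℝ) < n := by positivity
    have hn1 : (1:ℝ) < n := by exact_mod_cast lt_of_lt_of_le one_lt_two (by exact_mod_cast hn2)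
    set L : ℝ := Real.logb b n with hLdef
    have hL0 : 0 < L := Real.logb_pos hb1 hn1
    set m : ℕ := ⌈3 * L⌉₊ with hmdef
    have hm1 : 1 ≤ m := by
      rw [hmdef]
      exact Nat.one_le_ceil_iff.mpr (by positivity)
    have hLm : 3 * L ≤ (m : ℝ) := Nat.le_ceil _
    set a : ℝ := (n:ℝ) ^ m * 2 ^ m * r ^ M0 m with hadef
    have ha0 : 0 ≤ a := by positivity
    have hkey : r ^ ((3: ℝ) * L) = (((n:ℝ)) ^ (3:ℕ))⁻¹ := by
      have hbr : b⁻¹ = r := by rw [hbdef, one_div, inv_inv]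
      rw [← hbr, Real.inv_rpow hb0.le, mul_comm (3:ℝ) L, Real.rpow_mul hb0.le,
        Real.rpow_logb hb0 hb1.ne' hn0]
      norm_cast
    have hrm : r ^ (m - 1 : ℕ) ≤ ((n:ℝ) ^ (3:ℕ))⁻¹ / r := by
      have h1 : r ^ (m - 1 : ℕ) = r ^ (((m:ℝ)) - 1) := by
        rw [← Real.rpow_natCast r (m - 1), Nat.cast_sub hm1, Nat.cast_one]
      rw [h1]
      calc r ^ ((m:ℝ) - 1) ≤ r ^ (3 * L - 1) :=
            Real.rpow_le_rpow_of_exponent_ge hr0 hr1.le (by linarith)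
        _ = r ^ ((3:ℝ) * L) / r ^ (1:ℝ) := by rw [Real.rpow_sub hr0]
        _ = ((n:ℝ) ^ (3:ℕ))⁻¹ / r := by rw [hkey, Real.rpow_one]
    set base : ℝ := (n:ℝ) ^ 2 * 4 * r ^ (m - 1 : ℕ) with hbasedef
    have hbase0 : 0 ≤ base := by positivity
    have hbaseC : base ≤ C / n := by
      calc base ≤ (n:ℝ) ^ 2 * 4 * (((n:ℝ) ^ (3:ℕ))⁻¹ / r) := by
            apply mul_le_mul_of_nonneg_left hrm (by positivity)
        _ = C / n := by rw [hCdef]; field_simp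
    have hbase1 : base ≤ 1 := le_trans hbaseC ((div_le_one hn0).mpr hnC)
    have hsq : a ^ 2 = base ^ m := by
      have h2M : M0 m * 2 = (m - 1) * m := by
        have := two_mul_M0 m
        have h : m * m - m = (m - 1) * m := by rw [Nat.sub_one_mul]
        omega
      calc a ^ 2 = (n:ℝ)^(m*2) * 2^(m*2) * r^(M0 m * 2) := by rw [hadef]; ring
        _ = (n:ℝ)^(m*2) * 2^(m*2) * r^((m-1)*m) := by rw [h2M]
        _ = (n:ℝ)^(m*2) * 4^m * r^((m-1)*m) := by
            rw [show (2:ℝ)^(m*2) = 4^m by rw [mul_comm, pow_mul]; norm_num]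
        _ = base ^ m := by rw [hbasedef]; ring
    have haux : a ^ 2 ≤ C / n := by
      calc a ^ 2 = base ^ m := hsq
        _ ≤ base ^ 1 := pow_le_pow_of_le_one hbase0 hbase1 hm1
        _ = base := pow_one _
        _ ≤ C / n := hbaseC
    calc a = Real.sqrt (a ^ 2) := (Real.sqrt_sq ha0).symm
      _ ≤ Real.sqrt (C / n) := Real.sqrt_le_sqrt haux
  · have h1 : Tendsto (fun n : ℕ => C / (n:ℝ)) atTop (𝓝 0) :=
      tendsto_const_div_atTop_nhds_zero_nat C
    exact (Real.continuous_sqrt.tendsto' 0 0 (by simp)).comp h1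

lemma part_a {q : ℝ} {n : ℕ} {Ωn : Type*} (X : Fin n → Fin n → Ωn → ℝ) {ω : Ωn}
    (hgood : ∀ (v : Fin ⌈3 * Real.logb (1/(1-q)) n⌉₊ → Fin n)
      (σ : Fin ⌈3 * Real.logb (1/(1-q)) n⌉₊ → Bool),
      Function.Injective v → ω ∉ Bad X v σ)
    (φ : Fin n → ℝ) (hφ : ∀ i, φ i ≠ 0) :
    ∀ S : Finset (Fin n), 3 * Real.logb (1/(1-q)) n ≤ S.card →
      ∃ u ∈ S, ∃ w ∈ S, u ≠ w ∧ X u w ω * φ u * φ w < 0 := by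
  intro S hS
  set m := ⌈3 * Real.logb (1/(1-q)) n⌉₊ with hmdef
  have hm : m ≤ S.card := Nat.ceil_le.mpr hS
  obtain ⟨T, hTS, hT⟩ := Finset.exists_subset_card_eq hm
  set iso := T.orderIsoOfFin hT with hiso
  set v : Fin m → Fin n := fun i => (iso i : Fin n) with hvdef
  have hv : Function.Injective v := fun i j h => iso.injective (Subtype.coe_injective h)
  set σ : Fin m → Bool := fun i => decide (0 < φ (v i)) with hσdef
  have hbad := hgood v σ hv
  rw [Bad] at hbad
  simp only [Set.mem_iInter, Set.mem_setOf_eq, not_forall, not_not] at hbad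
  obtain ⟨e, he, hXe⟩ := hbad
  have he' := (Finset.mem_filter.mp he).2
  obtain ⟨i, _, hi⟩ := Finset.mem_image.mp he'.1
  obtain ⟨j, _, hj⟩ := Finset.mem_image.mp he'.2
  have hu : e.1.1 ∈ S := hTS (hi ▸ (iso i).2)
  have hw : e.1.2 ∈ S := hTS (hj ▸ (iso j).2)
  refine ⟨e.1.1, hu, e.1.2, hw, ne_of_lt e.2, ?_⟩
  have h1 : 0 < sb (σ i) * φ (v i) := sb_mul_pos (hφ _)
  have h2 : 0 < sb (σ j) * φ (v j) := sb_mul_pos (hφ _)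
  rw [← hi, ← hj] at hXe ⊢
  rw [hXe, tau_apply hv, tau_apply hv]
  nlinarith [mul_pos h1 h2]

lemma part_b {q : ℝ} (hq : 0 < q) (hq1 : q < 1) {n : ℕ} (hn : 2 ≤ n)
    {Ωn : Type*} (X : Fin n → Fin n → Ωn → ℝ) {ω : Ωn} (φ : Fin n → ℝ)
    (ha : ∀ S : Finset (Fin n), 3 * Real.logb (1/(1-q)) n ≤ S.card →
      ∃ u ∈ S, ∃ w ∈ S, u ≠ w ∧ X u w ω * φ u * φ w < 0) :
    ∀ (s : ℕ) (P : Fin n → Fin s),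
      (∀ u v, u ≠ v → P u = P v → 0 ≤ X u v ω * φ u * φ v) →
      (n : ℝ) / (3 * Real.logb (1/(1-q)) n) ≤ s := by
  intro s P hP
  have hb1 : (1:ℝ) < 1/(1-q) := by
    rw [lt_div_iff₀ (by linarith)]; linarith
  have hn1 : (1:ℝ) < n := by exact_mod_cast lt_of_lt_of_le one_lt_two (by exact_mod_cast hn)
  have hL : 0 < 3 * Real.logb (1/(1-q)) n := by
    have := Real.logb_pos hb1 hn1; linarith
  classical
  have hfib : ∀ c : Fin s,
      ((Finset.univ.filter fun u => P u = c).card : ℝ) < 3 * Real.logb (1/(1-q)) n := by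
    intro c
    by_contra hcon
    push_neg at hcon
    obtain ⟨u, hu, w, hw, hne, hlt⟩ := ha _ hcon
    simp only [Finset.mem_filter] at hu hw
    exact absurd (hP u w hne (hu.2.trans hw.2.symm)) (not_le_of_gt hlt)
  have hsum : (n : ℕ) = ∑ c : Fin s, (Finset.univ.filter fun u => P u = c).card := by
    have := Finset.card_eq_sum_card_fiberwise (f := P)
      (s := (Finset.univ : Finset (Fin n))) (t := Finset.univ) (fun u _ => mem_univ _)
    simpa using this
  rw [div_le_iff₀ hL]
  calc (n:ℝ) = ∑ c : Fin s, ((Finset.univ.filter fun u => P u = c).card : ℝ) := by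
        exact_mod_cast hsum
    _ ≤ (Finset.univ : Finset (Fin s)).card • (3 * Real.logb (1/(1-q)) n) :=
        Finset.sum_le_card_nsmul _ _ _ (fun c _ => (hfib c).le)
    _ = (s:ℝ) * (3 * Real.logb (1/(1-q)) n) := by
        rw [nsmul_eq_mul]; simp

theorem stmt13 (p q : ℝ) (hq : 0 < q) (hqp : q ≤ p) (hp : p < 1) (hpq : p + q ≤ 1)
    (Ω : ℕ → Type*) [∀ n, MeasurableSpace (Ω n)] (μ : ∀ n, Measure (Ω n))
    [∀ n, IsProbabilityMeasure (μ n)]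
    (X : ∀ n, Fin n → Fin n → Ω n → ℝ)
    (hsym : ∀ n u v, X n u v = X n v u)
    (hmeas : ∀ n u v, Measurable (X n u v))
    (hindep : ∀ n, iIndepFun
      (fun e : {e : Fin n × Fin n // e.1 < e.2} => X n e.1.1 e.1.2) (μ n))
    (hdist : ∀ n, ∀ u v : Fin n, u ≠ v →
      μ n {ω | X n u v ω = 1} = ENNReal.ofReal p ∧
      μ n {ω | X n u v ω = -1} = ENNReal.ofReal q ∧
      μ n {ω | X n u v ω = 0} = ENNReal.ofReal (1 - p - q)) :
    Filter.Tendsto (fun n => μ n {ω | ∀ φ : Fin n → ℝ, (∀ i, φ i ≠ 0) →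
        (∀ S : Finset (Fin n), 3 * Real.logb (1 / (1 - q)) n ≤ S.card →
          ∃ u ∈ S, ∃ v ∈ S, u ≠ v ∧ X n u v ω * φ u * φ v < 0) ∧
        (∀ (s : ℕ) (P : Fin n → Fin s),
          (∀ u v, u ≠ v → P u = P v → 0 ≤ X n u v ω * φ u * φ v) →
          (n : ℝ) / (3 * Real.logb (1 / (1 - q)) n) ≤ s)})
      Filter.atTop (nhds 1) := by
  classical
  have hq1 : q < 1 := lt_of_le_of_lt hqp hp
  set m : ℕ → ℕ := fun n => ⌈3 * Real.logb (1 / (1 - q)) n⌉₊ with hmdef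
  set BadU : ∀ n, Set (Ω n) := fun n =>
    ⋃ pr : (Fin (m n) → Fin n) × (Fin (m n) → Bool),
      if Function.Injective pr.1 then Bad (X n) pr.1 pr.2 else ∅ with hBadUdef
  have hmeasU : ∀ n, MeasurableSet (BadU n) := by
    intro n
    apply MeasurableSet.iUnion
    intro pr
    by_cases h : Function.Injective pr.1
    · rw [if_pos h]; exact measurableSet_bad (hmeas n) _ _
    · rw [if_neg h]; exact MeasurableSet.empty
  have hBadU_le : ∀ n, μ n (BadU n) ≤
      ENNReal.ofReal ((n:ℝ) ^ (m n) * 2 ^ (m n) * (1 - q) ^ M0 (m n)) := by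
    intro n
    have hle1 : μ n (BadU n) ≤
        ∑ pr : (Fin (m n) → Fin n) × (Fin (m n) → Bool),
          μ n (if Function.Injective pr.1 then Bad (X n) pr.1 pr.2 else ∅) := by
      rw [hBadUdef]
      exact (measure_iUnion_le _).trans_eq (tsum_fintype _)
    have hle2 : ∀ pr : (Fin (m n) → Fin n) × (Fin (m n) → Bool),
        μ n (if Function.Injective pr.1 then Bad (X n) pr.1 pr.2 else ∅)
          ≤ ENNReal.ofReal (1 - q) ^ M0 (m n) := by
      intro pr
      by_cases h : Function.Injective pr.1
      · rw [if_pos h]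
        exact meas_bad_le hq hqp (μ n) (X n) (hmeas n) (hindep n)
          (fun u v huv => hdist n u v huv) h pr.2
      · rw [if_neg h]; simp
    have hcard : (Finset.univ :
        Finset ((Fin (m n) → Fin n) × (Fin (m n) → Bool))).card
          = n ^ (m n) * 2 ^ (m n) := by
      simp [Fintype.card_fun]
    calc μ n (BadU n) ≤ _ := hle1
      _ ≤ (Finset.univ : Finset ((Fin (m n) → Fin n) × (Fin (m n) → Bool))).card
            • (ENNReal.ofReal (1 - q) ^ M0 (m n)) :=
          Finset.sum_le_card_nsmul _ _ _ (fun pr _ => hle2 pr)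
      _ = ENNReal.ofReal ((n:ℝ) ^ (m n) * 2 ^ (m n) * (1 - q) ^ M0 (m n)) := by
          rw [hcard, nsmul_eq_mul, ← ENNReal.ofReal_pow (by linarith),
            ← ENNReal.ofReal_natCast (n ^ (m n) * 2 ^ (m n)),
            ← ENNReal.ofReal_mul (by positivity)]
          congr 1
          push_cast
          ring
  have htend0 : Tendsto (fun n => μ n (BadU n)) atTop (𝓝 0) := by
    apply tendsto_of_tendsto_of_tendsto_of_le_of_le
      (tendsto_const_nhds : Tendsto (fun _ : ℕ => (0:ℝ≥0∞)) atTop (𝓝 0))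
      ?_ (fun n => zero_le) hBadU_le
    have := (ENNReal.continuous_ofReal.tendsto' 0 0 (by simp)).comp (an_tendsto hq hq1)
    exact this
  apply tendsto_of_tendsto_of_tendsto_of_le_of_le'
    (g := fun n => 1 - μ n (BadU n)) (h := fun _ => (1:ℝ≥0∞))
  · have := ENNReal.Tendsto.sub
      (tendsto_const_nhds : Tendsto (fun _ : ℕ => (1:ℝ≥0∞)) atTop (𝓝 1))
      htend0 (Or.inl ENNReal.one_ne_top)
    simpa using this
  · exact tendsto_const_nhds
  · filter_upwards [eventually_ge_atTop 2] with n hn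
    have hsub : (BadU n)ᶜ ⊆ {ω | ∀ φ : Fin n → ℝ, (∀ i, φ i ≠ 0) →
        (∀ S : Finset (Fin n), 3 * Real.logb (1 / (1 - q)) n ≤ S.card →
          ∃ u ∈ S, ∃ v ∈ S, u ≠ v ∧ X n u v ω * φ u * φ v < 0) ∧
        (∀ (s : ℕ) (P : Fin n → Fin s),
          (∀ u v, u ≠ v → P u = P v → 0 ≤ X n u v ω * φ u * φ v) →
          (n : ℝ) / (3 * Real.logb (1 / (1 - q)) n) ≤ s)} := by
      intro ω hω
      intro φ hφ
      have hgood : ∀ (v : Fin (m n) → Fin n) (σ : Fin (m n) → Bool),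
          Function.Injective v → ω ∉ Bad (X n) v σ := by
        intro v σ hv hmem
        exact hω (Set.mem_iUnion.mpr ⟨(v, σ), by rw [if_pos hv]; exact hmem⟩)
      have ha := part_a (X n) hgood φ hφ
      exact ⟨ha, part_b hq hq1 hn (X n) φ ha⟩
    calc 1 - μ n (BadU n) = μ n (BadU n)ᶜ := (prob_compl_eq_one_sub (hmeasU n)).symm
      _ ≤ _ := measure_mono hsub
  · filter_upwards with n
    exact prob_le_one
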